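/- arXiv:2302.01975 — 4 statements merged into one kernel-verified Lean document; each statement's English description precedes it below -/
import Mathlib

section
/- With E, p, δ, δ̃, g as above (0 ≤ δ̃(e) ≤ δ(e) ≤ 1), for any S ⊆ E and any two distinct elements e₁, e₂ ∈ E, the inequality g(S) + g(S ∪ {e₁, e₂}) ≥ g(S ∪ {e₁}) + g(S ∪ {e₂}) holds; i.e., g is supermodular on subsets of E. -/
/-- The path-reliability function `g` is supermodular (pairwise form). -/
theorem stmt_1 {α : Type*} [DecidableEq α] (E p : Finset α) (hp : p ⊆ E)
    (δ δt : α → ℝ) (hδ : ∀ e ∈ E, 0 ≤ δt e ∧ δt e ≤ δ e ∧ δ e ≤ 1)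
    (g : Finset α → ℝ)
    (hg : ∀ S, g S = (∏ e ∈ p \ S, δ e) * ∏ e ∈ p ∩ S, δt e)
    (S : Finset α) (hS : S ⊆ E) (e₁ e₂ : α) (he₁ : e₁ ∈ E) (he₂ : e₂ ∈ E)
    (hne : e₁ ≠ e₂) :
    g (insert e₁ S) + g (insert e₂ S) ≤ g S + g (insert e₁ (insert e₂ S)) := by
  have key : ∀ (T : Finset α) (e : α), e ∉ p → g (insert e T) = g T := by
    intro T e he
    have h1 : p \ insert e T = p \ T := by
      ext x; simp only [Finset.mem_sdiff, Finset.mem_insert]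
      constructor <;> rintro ⟨hx, hx'⟩ <;> refine ⟨hx, ?_⟩
      · exact fun h => hx' (Or.inr h)
      · rintro (rfl | h) <;> [exact he hx; exact hx' h]
    have h2 : p ∩ insert e T = p ∩ T := by
      ext x; simp only [Finset.mem_inter, Finset.mem_insert]
      constructor <;> rintro ⟨hx, hx'⟩ <;> [skip; exact ⟨hx, Or.inr hx'⟩]
      rcases hx' with rfl | hx' <;> [exact absurd hx he; exact ⟨hx, hx'⟩]
    rw [hg, hg, h1, h2]
  by_cases h1S : e₁ ∈ S
  · rw [Finset.insert_eq_self.mpr h1S, Finset.insert_eq_self.mpr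
      (Finset.mem_insert_of_mem h1S)]
  by_cases h2S : e₂ ∈ S
  · rw [Finset.insert_eq_self.mpr h2S]
    linarith
  by_cases h1p : e₁ ∈ p
  swap
  · rw [key S e₁ h1p, key (insert e₂ S) e₁ h1p]
  by_cases h2p : e₂ ∈ p
  swap
  · rw [Finset.insert_comm, key S e₂ h2p, key (insert e₁ S) e₂ h2p]; linarith
  -- main case
  set P0 := ∏ e ∈ p \ insert e₁ (insert e₂ S), δ e with hP0
  set Q0 := ∏ e ∈ p ∩ S, δt e with hQ0
  have hP0nn : 0 ≤ P0 := Finset.prod_nonneg fun x hx => by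
    have := hδ x (hp (Finset.mem_sdiff.mp hx).1)
    linarith [this.1, this.2.1]
  have hQ0nn : 0 ≤ Q0 := Finset.prod_nonneg fun x hx =>
    (hδ x (hp (Finset.mem_inter.mp hx).1)).1
  have h2notin : e₂ ∉ p \ insert e₁ (insert e₂ S) := by simp
  have h1notin : e₁ ∉ insert e₂ (p \ insert e₁ (insert e₂ S)) := by
    simp [hne]
  have h1notin' : e₁ ∉ p ∩ S := by simp [h1S]
  have h2notin' : e₂ ∉ p ∩ S := by simp [h2S]
  have h2notin'' : e₂ ∉ insert e₁ (p ∩ S) := by simp [hne.symm, h2S]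
  have e1 : p \ S = insert e₁ (insert e₂ (p \ insert e₁ (insert e₂ S))) := by
    ext x
    simp only [Finset.mem_sdiff, Finset.mem_insert]
    constructor
    · rintro ⟨hx, hx'⟩
      by_cases hx1 : x = e₁; · exact Or.inl hx1
      by_cases hx2 : x = e₂; · exact Or.inr (Or.inl hx2)
      exact Or.inr (Or.inr ⟨hx, by tauto⟩)
    · rintro (rfl | rfl | ⟨hx, hx'⟩)
      · exact ⟨h1p, h1S⟩
      · exact ⟨h2p, h2S⟩
      · exact ⟨hx, fun h => hx' (Or.inr (Or.inr h))⟩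
  have e2 : p \ insert e₁ S = insert e₂ (p \ insert e₁ (insert e₂ S)) := by
    ext x
    simp only [Finset.mem_sdiff, Finset.mem_insert]
    constructor
    · rintro ⟨hx, hx'⟩
      by_cases hx2 : x = e₂; · exact Or.inl hx2
      exact Or.inr ⟨hx, by tauto⟩
    · rintro (rfl | ⟨hx, hx'⟩)
      · exact ⟨h2p, by tauto⟩
      · exact ⟨hx, by tauto⟩
  have e3 : p \ insert e₂ S = insert e₁ (p \ insert e₁ (insert e₂ S)) := by
    ext x
    simp only [Finset.mem_sdiff, Finset.mem_insert]
    constructor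
    · rintro ⟨hx, hx'⟩
      by_cases hx1 : x = e₁; · exact Or.inl hx1
      exact Or.inr ⟨hx, by tauto⟩
    · rintro (rfl | ⟨hx, hx'⟩)
      · exact ⟨h1p, by tauto⟩
      · exact ⟨hx, by tauto⟩
  have i1 : p ∩ insert e₁ S = insert e₁ (p ∩ S) := by
    ext x
    simp only [Finset.mem_inter, Finset.mem_insert]
    constructor
    · rintro ⟨hx, rfl | hx'⟩ <;> tauto
    · rintro (rfl | ⟨hx, hx'⟩) <;> tauto
  have i2 : p ∩ insert e₂ S = insert e₂ (p ∩ S) := by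
    ext x
    simp only [Finset.mem_inter, Finset.mem_insert]
    constructor
    · rintro ⟨hx, rfl | hx'⟩ <;> tauto
    · rintro (rfl | ⟨hx, hx'⟩) <;> tauto
  have i3 : p ∩ insert e₁ (insert e₂ S) = insert e₁ (insert e₂ (p ∩ S)) := by
    ext x
    simp only [Finset.mem_inter, Finset.mem_insert]
    constructor
    · rintro ⟨hx, rfl | rfl | hx'⟩ <;> tauto
    · rintro (rfl | rfl | ⟨hx, hx'⟩) <;> tauto
  have h1notinE' : e₁ ∉ insert e₂ (p ∩ S) := by simp [hne, h1S]
  have h1notinP : e₁ ∉ p \ insert e₁ (insert e₂ S) := by simp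
  rw [hg S, hg (insert e₁ S), hg (insert e₂ S), hg (insert e₁ (insert e₂ S)),
    e1, e2, e3, i1, i2, i3,
    Finset.prod_insert h1notin, Finset.prod_insert h2notin,
    Finset.prod_insert h1notin', Finset.prod_insert h2notin',
    Finset.prod_insert h1notinE', Finset.prod_insert h2notin', Finset.prod_insert h1notinP]
  have hb1 := hδ e₁ he₁
  have hb2 := hδ e₂ he₂
  nlinarith [mul_nonneg hP0nn hQ0nn, mul_nonneg (sub_nonneg.mpr hb1.2.1)
    (sub_nonneg.mpr hb2.2.1), hb1.1, hb2.1]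
end

section
/- With the setup as above and assuming δ(e) > 0 for all e ∈ p, for any S ⊆ E and distinct e₁, e₂ ∈ E \ S, the identity g(S) + g(S ∪ {e₁, e₂}) − g(S ∪ {e₁}) − g(S ∪ {e₂}) = g(S) · (1 − δ̃(e₁)/δ(e₁)·[e₁ ∈ p]' ) · (1 − δ̃(e₂)/δ(e₂)·[e₂∈p]') holds when e₁, e₂ ∈ p, where in that case the right-hand side equals g(S)·(1 − δ̃(e₁)/δ(e₁))·(1 − δ̃(e₂)/δ(e₂)). -/
/-- Identity for the supermodularity gap of `g` when both new edges lie on the path. -/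
theorem stmt_3 {α : Type*} [DecidableEq α] (E p : Finset α) (hp : p ⊆ E)
    (δ δt : α → ℝ)
    (hδ : ∀ e ∈ p, 0 < δ e ∧ δ e ≤ 1 ∧ 0 ≤ δt e ∧ δt e ≤ δ e)
    (g : Finset α → ℝ)
    (hg : ∀ S, g S = (∏ e ∈ p \ S, δ e) * ∏ e ∈ p ∩ S, δt e)
    (S : Finset α) (hS : S ⊆ E)
    (e₁ e₂ : α) (he₁p : e₁ ∈ p) (he₂p : e₂ ∈ p)
    (he₁S : e₁ ∉ S) (he₂S : e₂ ∉ S) (hne : e₁ ≠ e₂) :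
    g S + g (insert e₁ (insert e₂ S)) - g (insert e₁ S) - g (insert e₂ S)
      = g S * (1 - δt e₁ / δ e₁) * (1 - δt e₂ / δ e₂) := by
  have h1 : δ e₁ ≠ 0 := ne_of_gt (hδ e₁ he₁p).1
  have h2 : δ e₂ ≠ 0 := ne_of_gt (hδ e₂ he₂p).1
  have hd1 : e₁ ∈ p \ S := Finset.mem_sdiff.2 ⟨he₁p, he₁S⟩
  have hd2 : e₂ ∈ (p \ S).erase e₁ :=
    Finset.mem_erase.2 ⟨hne.symm, Finset.mem_sdiff.2 ⟨he₂p, he₂S⟩⟩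
  have hd2' : e₂ ∈ p \ S := Finset.mem_sdiff.2 ⟨he₂p, he₂S⟩
  have hd1' : e₁ ∈ (p \ S).erase e₂ :=
    Finset.mem_erase.2 ⟨hne, hd1⟩
  have hi1 : e₁ ∉ p ∩ S := fun h => he₁S (Finset.mem_inter.1 h).2
  have hi2 : e₂ ∉ p ∩ S := fun h => he₂S (Finset.mem_inter.1 h).2
  have hi2' : e₂ ∉ insert e₁ (p ∩ S) := by
    simp [hne.symm, hi2]
  have hset1 : p \ insert e₁ S = (p \ S).erase e₁ := by
    ext x; simp [Finset.mem_sdiff, Finset.mem_erase, ]; aesop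
  have hset2 : p \ insert e₂ S = (p \ S).erase e₂ := by
    ext x; simp [Finset.mem_sdiff, Finset.mem_erase, ]; aesop
  have hset12 : p \ insert e₁ (insert e₂ S) = ((p \ S).erase e₁).erase e₂ := by
    ext x; simp [Finset.mem_sdiff, Finset.mem_erase]; aesop
  have hcap1 : p ∩ insert e₁ S = insert e₁ (p ∩ S) := by
    ext x; simp [Finset.mem_inter]; aesop
  have hcap2 : p ∩ insert e₂ S = insert e₂ (p ∩ S) := by
    ext x; simp [Finset.mem_inter]; aesop
  have hcap12 : p ∩ insert e₁ (insert e₂ S) = insert e₂ (insert e₁ (p ∩ S)) := by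
    ext x; simp [Finset.mem_inter]; aesop
  have hee : ((p \ S).erase e₁).erase e₂ = ((p \ S).erase e₂).erase e₁ := by
    ext x; simp [Finset.mem_erase]; aesop
  set A := ∏ e ∈ ((p \ S).erase e₁).erase e₂, δ e with hA
  set B := ∏ e ∈ p ∩ S, δt e with hB
  have hpS : ∏ e ∈ p \ S, δ e = δ e₁ * (δ e₂ * A) := by
    rw [hA, ← Finset.mul_prod_erase _ _ hd1, ← Finset.mul_prod_erase _ _ hd2]
  have hp1 : ∏ e ∈ (p \ S).erase e₁, δ e = δ e₂ * A := by
    rw [hA, ← Finset.mul_prod_erase _ _ hd2]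
  have hp2 : ∏ e ∈ (p \ S).erase e₂, δ e = δ e₁ * A := by
    rw [hA, hee, ← Finset.mul_prod_erase _ _ hd1']
  rw [hg, hg, hg, hg, hset1, hset2, hset12, hcap1, hcap2, hcap12,
    Finset.prod_insert hi2', Finset.prod_insert hi1, Finset.prod_insert hi2,
    hpS, hp1, hp2]
  field_simp
  ring
end

section
/- Let E be finite, and let {(p_k, θ_k, g_k)}_{k∈K} be a finite family where each p_k ⊆ E, θ_k ≥ 0, and g_k(S) = (∏_{e ∈ p_k \ S} δ_k(e)) · (∏_{e ∈ p_k ∩ S} δ̃_k(e)) with 0 ≤ δ̃_k(e) ≤ δ_k(e) ≤ 1. Then the function F(S) = 1 − ∑_{k∈K} θ_k · g_k(S) is submodular and non-decreasing in S. -/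
private lemma quad_ineq {u v a b : ℝ} (hu : 0 ≤ u) (hua : u ≤ a) (hub : u ≤ b)
    (hav : a ≤ v) (hbv : b ≤ v) (hm : u * v = a * b) : a + b ≤ u + v := by
  nlinarith [mul_nonneg (sub_nonneg.2 hav) (sub_nonneg.2 hbv),
    mul_nonneg (sub_nonneg.2 hua) (sub_nonneg.2 hub)]

/-- The defender's objective `F(S) = 1 - ∑ₖ θₖ gₖ(S)` is submodular and non-decreasing. -/
theorem stmt_6 {α ι : Type*} [DecidableEq α] [Fintype ι]
    (p : ι → Finset α) (θ : ι → ℝ) (hθ : ∀ k, 0 ≤ θ k)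
    (δ δt : ι → α → ℝ)
    (hδ : ∀ k, ∀ e, 0 ≤ δt k e ∧ δt k e ≤ δ k e ∧ δ k e ≤ 1)
    (g : ι → Finset α → ℝ)
    (hg : ∀ k S, g k S = (∏ e ∈ p k \ S, δ k e) * ∏ e ∈ p k ∩ S, δt k e)
    (F : Finset α → ℝ)
    (hF : ∀ S, F S = 1 - ∑ k, θ k * g k S) :
    (∀ S₁ S₂ : Finset α, F (S₁ ∪ S₂) + F (S₁ ∩ S₂) ≤ F S₁ + F S₂) ∧
    (∀ S₁ S₂ : Finset α, S₁ ⊆ S₂ → F S₁ ≤ F S₂) := by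
  -- rewrite g as a single product
  have hg' : ∀ k S, g k S = ∏ e ∈ p k, (if e ∈ S then δt k e else δ k e) := by
    intro k S
    rw [hg k S, Finset.prod_ite, mul_comm]
    congr 1
    apply Finset.prod_congr _ fun _ _ => rfl
    ext e
    simp [Finset.mem_filter, Finset.mem_sdiff]
  have hfac : ∀ k (S : Finset α) e, 0 ≤ (if e ∈ S then δt k e else δ k e) := by
    intro k S e
    obtain ⟨h1, h2, h3⟩ := hδ k e
    split <;> linarith
  have hnonneg : ∀ k S, 0 ≤ g k S := by
    intro k S
    rw [hg' k S]
    exact Finset.prod_nonneg fun e _ => hfac k S e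
  have hmono : ∀ k (S T : Finset α), S ⊆ T → g k T ≤ g k S := by
    intro k S T hST
    rw [hg' k S, hg' k T]
    apply Finset.prod_le_prod (fun e _ => hfac k T e)
    intro e _
    obtain ⟨h1, h2, h3⟩ := hδ k e
    by_cases heS : e ∈ S
    · simp [heS, hST heS]
    · by_cases heT : e ∈ T <;> simp [heS, heT] <;> linarith
  have hmul : ∀ k (S₁ S₂ : Finset α),
      g k (S₁ ∪ S₂) * g k (S₁ ∩ S₂) = g k S₁ * g k S₂ := by
    intro k S₁ S₂
    simp only [hg']
    rw [← Finset.prod_mul_distrib, ← Finset.prod_mul_distrib]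
    apply Finset.prod_congr rfl
    intro e _
    by_cases h1 : e ∈ S₁ <;> by_cases h2 : e ∈ S₂ <;>
      simp [Finset.mem_union, Finset.mem_inter, h1, h2, mul_comm]
  have key : ∀ k (S₁ S₂ : Finset α),
      g k S₁ + g k S₂ ≤ g k (S₁ ∪ S₂) + g k (S₁ ∩ S₂) := by
    intro k S₁ S₂
    exact quad_ineq (hnonneg k _) (hmono k _ _ Finset.subset_union_left)
      (hmono k _ _ Finset.subset_union_right)
      (hmono k _ _ Finset.inter_subset_left)
      (hmono k _ _ Finset.inter_subset_right) (hmul k S₁ S₂)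
  constructor
  · intro S₁ S₂
    simp only [hF]
    have : ∑ k, θ k * g k S₁ + ∑ k, θ k * g k S₂
        ≤ ∑ k, θ k * g k (S₁ ∪ S₂) + ∑ k, θ k * g k (S₁ ∩ S₂) := by
      rw [← Finset.sum_add_distrib, ← Finset.sum_add_distrib]
      apply Finset.sum_le_sum
      intro k _
      have := key k S₁ S₂
      nlinarith [hθ k]
    linarith
  · intro S₁ S₂ hsub
    simp only [hF]
    have : ∑ k, θ k * g k S₂ ≤ ∑ k, θ k * g k S₁ :=
      Finset.sum_le_sum fun k _ => mul_le_mul_of_nonneg_left (hmono k _ _ hsub) (hθ k)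
    linarith
end

section
/- Let f : Set E → ℝ≥0 be a non-decreasing submodular function on a finite set E with f(∅) = 0, and let OPT = f(S*) where S* is any subset with |S*| ≤ b maximizing f among sets of cardinality at most b. Let G_b be the set produced by b steps of the greedy algorithm that at each step adds an element maximizing the marginal gain. Then f(G_b) ≥ (1 − (1 − 1/b)^b) · OPT ≥ (1 − 1/e) · OPT. -/
/-- Submodularity telescoping: the marginal gain of adding a set is at most
the sum of individual marginal gains. -/
lemma submod_sum_bound {α : Type*} [DecidableEq α]
    (f : Finset α → ℝ)
    (hmono : ∀ S₁ S₂ : Finset α, S₁ ⊆ S₂ → f S₁ ≤ f S₂)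
    (hsub : ∀ S₁ S₂ : Finset α, f (S₁ ∪ S₂) + f (S₁ ∩ S₂) ≤ f S₁ + f S₂)
    (A : Finset α) :
    ∀ T : Finset α, f (A ∪ T) - f A ≤ ∑ e ∈ T, (f (insert e A) - f A) := by
  intro T
  induction T using Finset.induction_on with
  | empty => simp
  | @insert e T he ih =>
    have hun : (A ∪ T) ∪ insert e A = A ∪ insert e T := by
      ext x; simp; tauto
    have hsub' := hsub (A ∪ T) (insert e A)
    rw [hun] at hsub'
    have hint : f A ≤ f ((A ∪ T) ∩ insert e A) := by
      apply hmono
      intro x hx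
      simp [hx]
    rw [Finset.sum_insert he]
    linarith

/-- Nemhauser–Wolsey–Fisher greedy guarantee for monotone submodular maximization
subject to a cardinality constraint. -/
theorem stmt_11 {α : Type*} [DecidableEq α] [Fintype α]
    (f : Finset α → ℝ)
    (hnonneg : ∀ S : Finset α, 0 ≤ f S)
    (hmono : ∀ S₁ S₂ : Finset α, S₁ ⊆ S₂ → f S₁ ≤ f S₂)
    (hsub : ∀ S₁ S₂ : Finset α, f (S₁ ∪ S₂) + f (S₁ ∩ S₂) ≤ f S₁ + f S₂)
    (h0 : f ∅ = 0)
    (b : ℕ) (hb : 1 ≤ b)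
    (Sstar : Finset α) (hcard : Sstar.card ≤ b)
    (hopt : ∀ S : Finset α, S.card ≤ b → f S ≤ f Sstar)
    (G : ℕ → Finset α) (hG0 : G 0 = ∅)
    (hGstep : ∀ i < b, ∃ e ∈ Finset.univ \ G i,
      G (i + 1) = insert e (G i) ∧
      ∀ e' ∈ Finset.univ \ G i,
        f (insert e' (G i)) - f (G i) ≤ f (insert e (G i)) - f (G i)) :
    (1 - (1 - 1 / (b : ℝ)) ^ b) * f Sstar ≤ f (G b) ∧
    (1 - 1 / Real.exp 1) * f Sstar ≤ (1 - (1 - 1 / (b : ℝ)) ^ b) * f Sstar := by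
  have hbR : (0:ℝ) < (b:ℝ) := by exact_mod_cast Nat.lt_of_lt_of_le Nat.zero_lt_one hb
  have hbR1 : (1:ℝ) ≤ (b:ℝ) := by exact_mod_cast hb
  have hratio : (0:ℝ) ≤ 1 - 1 / (b:ℝ) := by
    have : 1 / (b:ℝ) ≤ 1 := by
      rw [div_le_one hbR]; exact hbR1
    linarith
  set OPT := f Sstar with hOPT
  have hOPT0 : 0 ≤ OPT := hnonneg _
  -- per-step decrease
  have key : ∀ i < b, OPT - f (G (i+1)) ≤ (1 - 1/(b:ℝ)) * (OPT - f (G i)) := by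
    intro i hi
    obtain ⟨e, he, hGe, hmax⟩ := hGstep i hi
    set g := f (insert e (G i)) - f (G i) with hg
    have hg0 : 0 ≤ g := by
      have := hmono (G i) (insert e (G i)) (Finset.subset_insert _ _)
      linarith
    -- OPT ≤ f (G i ∪ Sstar)
    have h1 : OPT ≤ f (G i ∪ Sstar) := hmono _ _ Finset.subset_union_right
    have h2 := submod_sum_bound f hmono hsub (G i) Sstar
    -- each term ≤ g
    have h3 : ∑ e' ∈ Sstar, (f (insert e' (G i)) - f (G i)) ≤ ∑ _e' ∈ Sstar, g := by
      apply Finset.sum_le_sum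
      intro e' _
      by_cases hmem : e' ∈ G i
      · rw [Finset.insert_eq_self.mpr hmem]; simpa using hg0
      · exact hmax e' (by simpa using hmem)
    have h4 : (Sstar.card : ℝ) * g ≤ (b:ℝ) * g := by
      apply mul_le_mul_of_nonneg_right _ hg0
      exact_mod_cast hcard
    have h5 : OPT - f (G i) ≤ (b:ℝ) * g := by
      rw [Finset.sum_const, nsmul_eq_mul] at h3
      linarith
    have h6 : (1/(b:ℝ)) * (OPT - f (G i)) ≤ g := by
      have := mul_le_mul_of_nonneg_left h5 (le_of_lt (by positivity : (0:ℝ) < 1/(b:ℝ)))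
      rw [← mul_assoc, one_div_mul_cancel (ne_of_gt hbR), one_mul] at this
      exact this
    have hGi1 : f (G (i+1)) = f (G i) + g := by rw [hGe]; ring
    rw [hGi1]; ring_nf; ring_nf at h6; linarith
  -- induction
  have main : ∀ i ≤ b, OPT - f (G i) ≤ (1 - 1/(b:ℝ))^i * OPT := by
    intro i
    induction i with
    | zero => intro _; simp [hG0, h0]
    | succ n ih =>
      intro hn
      have hnb : n < b := hn
      have h1 := key n hnb
      have h2 := ih (le_of_lt hnb)
      calc OPT - f (G (n+1)) ≤ (1 - 1/(b:ℝ)) * (OPT - f (G n)) := h1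
        _ ≤ (1 - 1/(b:ℝ)) * ((1 - 1/(b:ℝ))^n * OPT) :=
            mul_le_mul_of_nonneg_left h2 hratio
        _ = (1 - 1/(b:ℝ))^(n+1) * OPT := by ring
  have hfirst : (1 - (1 - 1 / (b : ℝ)) ^ b) * OPT ≤ f (G b) := by
    have := main b le_rfl
    nlinarith
  refine ⟨hfirst, ?_⟩
  -- (1 - 1/b)^b ≤ 1 / e
  have hexp : (1 - 1/(b:ℝ))^b ≤ 1 / Real.exp 1 := by
    have h1 : 1 - 1/(b:ℝ) ≤ Real.exp (-(1/(b:ℝ))) := by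
      have := Real.add_one_le_exp (-(1/(b:ℝ)))
      linarith
    have h2 : (1 - 1/(b:ℝ))^b ≤ (Real.exp (-(1/(b:ℝ))))^b :=
      pow_le_pow_left₀ hratio h1 b
    have h3 : (Real.exp (-(1/(b:ℝ))))^b = Real.exp ((b:ℝ) * (-(1/(b:ℝ)))) := by
      rw [← Real.exp_nat_mul]
    have h4 : (b:ℝ) * (-(1/(b:ℝ))) = -1 := by
      field_simp
    rw [h3, h4, Real.exp_neg] at h2
    simpa [one_div] using h2
  have : (1 - 1 / Real.exp 1) ≤ (1 - (1 - 1/(b:ℝ))^b) := by linarith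
  exact mul_le_mul_of_nonneg_right this hOPT0
end
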